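/- Arithmetic core of the ramification estimate for the Gauss map of pseudo-algebraic minimal surfaces in R^3 (totally ramified value number): Let G, k, d, r₀, l₀, n₀, n_r be natural numbers with d ≥ 1, k ≥ 1 and 2G − 2 + k > 0. Let μ₁, …, μ_k be integers with μ_j ≥ 1 for all j and 2d − (μ₁ + ⋯ + μ_k) = 2G − 2. Let ν₁, …, ν_{l₀} be integers with 2 ≤ ν_i ≤ d for all i. Assume (a) d·r₀ − n₀ ≤ k, (b) d·l₀ − n_r ≤ Σ_{i=1}^{l₀} d/ν_i (as rational numbers), and (c) n₀ + n_r ≤ 2(d + G − 1). Set R = 2d/(2G − 2 + k). Then R ≥ 1, and r₀ + Σ_{i=1}^{l₀} (1 − 1/ν_i) ≤ 2 + 2/R. Moreover, if μ_j ≥ 2 for every j, then R > 1. -/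

import Mathlib

/-- Arithmetic core of the ramification estimate for the Gauss map of pseudo-algebraic
minimal surfaces in ℝ³ (totally ramified value number), Theorem 3.14 of the paper. -/
theorem stmt_0 (G k d r₀ l₀ n₀ nr : ℕ) (hd : 1 ≤ d) (hk : 1 ≤ k)
    (hGk : 0 < 2 * (G : ℤ) - 2 + k)
    (μ : Fin k → ℤ) (hμ : ∀ j, 1 ≤ μ j)
    (hRR : 2 * (d : ℤ) - ∑ j, μ j = 2 * G - 2)
    (ν : Fin l₀ → ℤ) (hν₂ : ∀ i, 2 ≤ ν i) (hνd : ∀ i, ν i ≤ (d : ℤ))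
    (ha : (d : ℤ) * r₀ - n₀ ≤ k)
    (hb : (d : ℚ) * l₀ - nr ≤ ∑ i, (d : ℚ) / (ν i : ℚ))
    (hc : (n₀ : ℤ) + nr ≤ 2 * ((d : ℤ) + G - 1)) :
    1 ≤ 2 * (d : ℚ) / (2 * G - 2 + k) ∧
    (r₀ : ℚ) + ∑ i, (1 - 1 / (ν i : ℚ)) ≤ 2 + 2 / (2 * (d : ℚ) / (2 * G - 2 + k)) ∧
    ((∀ j, 2 ≤ μ j) → 1 < 2 * (d : ℚ) / (2 * G - 2 + k)) := by
  have hdQ : (0:ℚ) < (d:ℚ) := by exact_mod_cast hd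
  have hSZ : (0:ℤ) < 2 * (G : ℤ) - 2 + k := hGk
  have hSQ : (0:ℚ) < 2 * (G:ℚ) - 2 + k := by exact_mod_cast hSZ
  -- Σ μ ≥ k
  have hsum1 : (k:ℤ) ≤ ∑ j, μ j := by
    calc (k:ℤ) = ∑ _j : Fin k, (1:ℤ) := by simp
    _ ≤ ∑ j, μ j := Finset.sum_le_sum fun j _ => hμ j
  have h2d : 2 * (G:ℤ) - 2 + k ≤ 2 * d := by omega
  have h2dQ : 2 * (G:ℚ) - 2 + k ≤ 2 * d := by exact_mod_cast h2d
  have hR1 : 1 ≤ 2 * (d : ℚ) / (2 * G - 2 + k) := by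
    rw [le_div_iff₀ hSQ]; linarith
  refine ⟨hR1, ?_, ?_⟩
  · -- main inequality
    have hSQ' : (2 * (G:ℚ) - 2 + k) = ((2 * (G:ℤ) - 2 + k : ℤ) : ℚ) := by push_cast; ring
    have h2R : 2 / (2 * (d : ℚ) / (2 * G - 2 + k)) = (2 * G - 2 + k) / d := by
      rw [div_div_eq_mul_div, eq_div_iff (ne_of_gt hdQ), div_mul_eq_mul_div,
        div_eq_iff (by positivity : (2 * (d:ℚ)) ≠ 0)]
      ring
    rw [h2R]
    -- r₀ ≤ (n₀ + k)/d
    have hr : (r₀ : ℚ) ≤ ((n₀:ℚ) + k) / d := by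
      rw [le_div_iff₀ hdQ]
      have : (d : ℚ) * r₀ - n₀ ≤ k := by exact_mod_cast ha
      linarith
    -- Σ (1 - 1/ν) ≤ nr/d
    have hsum : ∑ i, (1 - 1 / (ν i : ℚ)) ≤ (nr:ℚ) / d := by
      have key : (d:ℚ) * ∑ i, (1 - 1 / (ν i : ℚ)) ≤ nr := by
        have : (d:ℚ) * ∑ i, (1 - 1 / (ν i : ℚ)) = (d:ℚ) * l₀ - ∑ i, (d:ℚ) / (ν i : ℚ) := by
          rw [Finset.mul_sum]
          simp only [mul_sub, mul_one, mul_one_div, Finset.sum_sub_distrib]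
          rw [Finset.sum_const]
          push_cast [Finset.card_fin]
          ring
        rw [this]; linarith
      rw [le_div_iff₀ hdQ, mul_comm]; exact key
    have hcQ : (n₀ : ℚ) + nr ≤ 2 * ((d : ℚ) + G - 1) := by exact_mod_cast hc
    have : (r₀ : ℚ) + ∑ i, (1 - 1 / (ν i : ℚ)) ≤ ((n₀:ℚ) + k + nr) / d := by
      calc (r₀ : ℚ) + ∑ i, (1 - 1 / (ν i : ℚ)) ≤ ((n₀:ℚ) + k)/d + (nr:ℚ)/d :=
        add_le_add hr hsum
      _ = ((n₀:ℚ) + k + nr)/d := by rw [← add_div]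
    refine this.trans ?_
    rw [div_le_iff₀ hdQ, add_mul, div_mul_cancel₀ _ (ne_of_gt hdQ)]
    nlinarith [hcQ]
  · intro h2
    have hsum2 : 2 * (k:ℤ) ≤ ∑ j, μ j := by
      calc 2 * (k:ℤ) = ∑ _j : Fin k, (2:ℤ) := by simp [mul_comm]
      _ ≤ ∑ j, μ j := Finset.sum_le_sum fun j _ => h2 j
    have hkZ : (1:ℤ) ≤ k := by exact_mod_cast hk
    have h2d' : 2 * (G:ℤ) - 2 + k < 2 * d := by omega
    have h2dQ' : 2 * (G:ℚ) - 2 + k < 2 * d := by exact_mod_cast h2d'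
    rw [lt_div_iff₀ hSQ]; linarith
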